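/- The relative suffix distance RSD is a metric on the set of finite strings over an alphabet Σ (satisfying non-negativity, identity of indiscernibles, symmetry, and the triangle inequality), and it takes values in [0, 1]. -/

import Mathlib

variable {α : Type*}

/-- Insertion-deletion edit distance. -/
def ED [DecidableEq α] : List α → List α → ℕ
  | [], ys => ys.length
  | _ :: xs, [] => xs.length + 1
  | x :: xs, y :: ys =>
    if x = y then ED xs ys
    else 1 + min (ED (x :: xs) ys) (ED xs (y :: ys))
termination_by xs ys => xs.length + ys.length
decreasing_by all_goals (simp; try omega)

/-- Length of longest common subsequence. -/
def LCSlen [DecidableEq α] : List α → List α → ℕ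
  | [], _ => 0
  | _ :: _, [] => 0
  | x :: xs, y :: ys =>
    if x = y then 1 + LCSlen xs ys
    else max (LCSlen (x :: xs) ys) (LCSlen xs (y :: ys))
termination_by xs ys => xs.length + ys.length
decreasing_by all_goals (simp; try omega)

/-- substring S[i, j) of an (infinite) string -/
def sub (S : ℕ → α) (i j : ℕ) : List α := (List.range' i (j - i)).map S

def IsSyncString [DecidableEq α] (ε : ℝ) (n : ℕ) (S : ℕ → α) : Prop :=
  ∀ i j k : ℕ, i < j → j < k → k ≤ n →
    (1 - ε) * ((k : ℝ) - i) < ED (sub S i j) (sub S j k)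

def ReachableR (c y : List α) (D G : ℝ) : Prop :=
  ∃ z : List α, z.Sublist c ∧ z.Sublist y ∧
    (c.length : ℝ) - z.length ≤ D ∧ (y.length : ℝ) - z.length ≤ G

noncomputable def RSD {σ : Type*} [DecidableEq σ] (S T : List σ) : ℝ :=
  ⨆ k : ℕ, (ED (S.drop (S.length - (k + 1))) (T.drop (T.length - (k + 1))) : ℝ) /
      (2 * (k + 1))



theorem ED_LCS [DecidableEq α] (xs ys : List α) :
    ED xs ys + 2 * LCSlen xs ys = xs.length + ys.length := by
  induction xs, ys using ED.induct with
  | case1 ys => simp [ED, LCSlen]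
  | case2 x xs => simp [ED, LCSlen]
  | case3 xs y ys ih =>
    rw [ED, LCSlen, if_pos rfl, if_pos rfl]
    simp only [List.length_cons]; omega
  | case4 x xs y ys h ih1 ih2 =>
    rw [ED, LCSlen, if_neg h, if_neg h]
    simp only [List.length_cons] at *; omega

theorem ED_symm [DecidableEq α] (xs ys : List α) : ED xs ys = ED ys xs := by
  induction xs, ys using ED.induct with
  | case1 ys => cases ys <;> simp [ED]
  | case2 x xs => simp [ED]
  | case3 xs y ys ih => rw [ED, ED, if_pos rfl, if_pos rfl, ih]
  | case4 x xs y ys h ih1 ih2 =>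
    rw [ED, ED, if_neg h, if_neg (fun hh => h hh.symm), ih1, ih2, min_comm]

theorem ED_self [DecidableEq α] (xs : List α) : ED xs xs = 0 := by
  induction xs with
  | nil => simp [ED]
  | cons x xs ih => rw [ED, if_pos rfl]; exact ih

theorem ED_eq_zero [DecidableEq α] {xs ys : List α} (h : ED xs ys = 0) : xs = ys := by
  induction xs, ys using ED.induct with
  | case1 ys => simp [ED, List.length_eq_zero_iff] at h; simp [h]
  | case2 x xs => simp [ED] at h
  | case3 xs y ys ih => rw [ED, if_pos rfl] at h; rw [ih h]
  | case4 x xs y ys hne ih1 ih2 => rw [ED, if_neg hne] at h; omega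

theorem LCS_exists [DecidableEq α] (xs ys : List α) :
    ∃ z : List α, z.Sublist xs ∧ z.Sublist ys ∧ z.length = LCSlen xs ys := by
  induction xs, ys using ED.induct with
  | case1 ys => exact ⟨[], by simp [LCSlen]⟩
  | case2 x xs => exact ⟨[], by simp [LCSlen]⟩
  | case3 xs y ys ih =>
    obtain ⟨z, h1, h2, h3⟩ := ih
    exact ⟨y :: z, List.cons_sublist_cons.mpr h1, List.cons_sublist_cons.mpr h2,
      by rw [LCSlen, if_pos rfl]; simp [h3]; omega⟩
  | case4 x xs y ys hne ih1 ih2 =>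
    obtain ⟨z1, a1, b1, c1⟩ := ih1
    obtain ⟨z2, a2, b2, c2⟩ := ih2
    rcases le_total (LCSlen (x :: xs) ys) (LCSlen xs (y :: ys)) with hle | hle
    · exact ⟨z2, a2.trans (List.sublist_cons_self x xs), b2,
        by rw [LCSlen, if_neg hne, max_eq_right hle]; exact c2⟩
    · exact ⟨z1, a1, b1.trans (List.sublist_cons_self y ys),
        by rw [LCSlen, if_neg hne, max_eq_left hle]; exact c1⟩

theorem LCS_ge [DecidableEq α] {z xs ys : List α} (h1 : z.Sublist xs) (h2 : z.Sublist ys) :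
    z.length ≤ LCSlen xs ys := by
  induction xs, ys using ED.induct generalizing z with
  | case1 ys => simp [List.sublist_nil.mp h1, LCSlen]
  | case2 x xs => simp [List.sublist_nil.mp h2, LCSlen]
  | case3 xs y ys ih =>
    rw [LCSlen, if_pos rfl]
    rcases List.sublist_cons_iff.mp h1 with ha | ⟨r1, rfl, ha⟩
    · rcases List.sublist_cons_iff.mp h2 with hb | ⟨r2, hz2, hb⟩
      · have := ih ha hb; omega
      · subst hz2
        have := ih ((List.sublist_cons_self y r2).trans ha) hb
        simp at *; omega
    · rcases List.sublist_cons_iff.mp h2 with hb | ⟨r2, hz2, hb⟩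
      · have := ih ha ((List.sublist_cons_self y r1).trans hb)
        simp at *; omega
      · obtain rfl : r2 = r1 := by injection hz2.symm
        have := ih ha hb; simp; omega
  | case4 x xs y ys hne ih1 ih2 =>
    rw [LCSlen, if_neg hne]
    cases h1 with
    | cons _ h1' => exact le_trans (ih2 h1' h2) (le_max_right _ _)
    | cons_cons _ h1' =>
      cases h2 with
      | cons _ h2' => exact le_trans (ih1 (List.cons_sublist_cons.mpr h1') h2') (le_max_left _ _)
      | cons_cons _ h2' => exact absurd rfl hne

theorem common_of_sublists {z1 z2 y : List α} (h1 : z1.Sublist y) (h2 : z2.Sublist y) :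
    ∃ w : List α, w.Sublist z1 ∧ w.Sublist z2 ∧
      z1.length + z2.length ≤ y.length + w.length := by
  induction y generalizing z1 z2 with
  | nil => exact ⟨[], by simp [List.sublist_nil.mp h1, List.sublist_nil.mp h2]⟩
  | cons a y ih =>
    cases h1 with
    | cons _ h1' =>
      cases h2 with
      | cons _ h2' =>
        obtain ⟨w, hw1, hw2, hw⟩ := ih h1' h2'
        exact ⟨w, hw1, hw2, by simp; omega⟩
      | cons_cons _ h2' =>
        obtain ⟨w, hw1, hw2, hw⟩ := ih h1' h2'
        exact ⟨w, hw1, hw2.trans (List.sublist_cons_self a _), by simp at *; omega⟩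
    | cons_cons _ h1' =>
      cases h2 with
      | cons _ h2' =>
        obtain ⟨w, hw1, hw2, hw⟩ := ih h1' h2'
        exact ⟨w, hw1.trans (List.sublist_cons_self a _), hw2, by simp at *; omega⟩
      | cons_cons _ h2' =>
        obtain ⟨w, hw1, hw2, hw⟩ := ih h1' h2'
        exact ⟨a :: w, List.cons_sublist_cons.mpr hw1, List.cons_sublist_cons.mpr hw2,
          by simp at *; omega⟩

theorem ED_triangle [DecidableEq α] (xs ys zs : List α) :
    ED xs zs ≤ ED xs ys + ED ys zs := by
  obtain ⟨z1, a1, b1, c1⟩ := LCS_exists xs ys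
  obtain ⟨z2, a2, b2, c2⟩ := LCS_exists ys zs
  obtain ⟨w, hw1, hw2, hw⟩ := common_of_sublists b1 a2
  have h1 := LCS_ge (hw1.trans a1) (hw2.trans b2)
  have e1 := ED_LCS xs zs
  have e2 := ED_LCS xs ys
  have e3 := ED_LCS ys zs
  have l1 := a1.length_le
  have l2 := b2.length_le
  omega

theorem ED_le [DecidableEq α] (xs ys : List α) : ED xs ys ≤ xs.length + ys.length := by
  have := ED_LCS xs ys; omega

section RSDlemmas
variable {σ : Type*} [DecidableEq σ]

lemma RSD_term_nonneg (S T : List σ) (k : ℕ) :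
    0 ≤ (ED (S.drop (S.length - (k + 1))) (T.drop (T.length - (k + 1))) : ℝ) /
      (2 * ((k : ℝ) + 1)) := by positivity

lemma RSD_term_le_one (S T : List σ) (k : ℕ) :
    (ED (S.drop (S.length - (k + 1))) (T.drop (T.length - (k + 1))) : ℝ) /
      (2 * ((k : ℝ) + 1)) ≤ 1 := by
  rw [div_le_one (by positivity)]
  have h := ED_le (S.drop (S.length - (k + 1))) (T.drop (T.length - (k + 1)))
  have h1 : (S.drop (S.length - (k + 1))).length ≤ k + 1 := by
    simp [List.length_drop]; omega
  have h2 : (T.drop (T.length - (k + 1))).length ≤ k + 1 := by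
    simp [List.length_drop]; omega
  have : ED (S.drop (S.length - (k + 1))) (T.drop (T.length - (k + 1))) ≤ 2 * (k + 1) := by
    omega
  calc (ED (S.drop (S.length - (k + 1))) (T.drop (T.length - (k + 1))) : ℝ)
      ≤ ((2 * (k + 1) : ℕ) : ℝ) := by exact_mod_cast this
    _ = 2 * ((k : ℝ) + 1) := by push_cast; ring

lemma RSD_bdd (S T : List σ) : BddAbove (Set.range fun k : ℕ =>
    (ED (S.drop (S.length - (k + 1))) (T.drop (T.length - (k + 1))) : ℝ) /
      (2 * ((k : ℝ) + 1))) :=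
  ⟨1, by rintro x ⟨k, rfl⟩; exact RSD_term_le_one S T k⟩

end RSDlemmas

/-- RSD is a metric on finite strings, taking values in `[0, 1]`. -/
theorem stmt10 {σ : Type*} [DecidableEq σ] (S T U : List σ) :
    0 ≤ RSD S T ∧ RSD S T ≤ 1 ∧ (RSD S T = 0 ↔ S = T) ∧ RSD S T = RSD T S ∧
      RSD S U ≤ RSD S T + RSD T U := by
  have key : ∀ (A B : List σ), 0 ≤ RSD A B := fun A B =>
    le_trans (RSD_term_nonneg A B 0) (le_ciSup (RSD_bdd A B) 0)
  refine ⟨key S T, ?_, ⟨?_, ?_⟩, ?_, ?_⟩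
  · exact ciSup_le fun k => RSD_term_le_one S T k
  · -- RSD = 0 → S = T
    intro h
    set k := S.length + T.length with hk
    have hle : (ED (S.drop (S.length - (k + 1))) (T.drop (T.length - (k + 1))) : ℝ) /
        (2 * ((k : ℝ) + 1)) ≤ 0 := h ▸ le_ciSup (RSD_bdd S T) k
    have heq : (ED (S.drop (S.length - (k + 1))) (T.drop (T.length - (k + 1))) : ℝ) = 0 := by
      have hnn := RSD_term_nonneg S T k
      have : (ED (S.drop (S.length - (k + 1))) (T.drop (T.length - (k + 1))) : ℝ) /
          (2 * ((k : ℝ) + 1)) = 0 := le_antisymm hle hnn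
      have hpos : (0:ℝ) < 2 * ((k : ℝ) + 1) := by positivity
      field_simp at this
      exact_mod_cast this
    have hS : S.length - (k + 1) = 0 := by omega
    have hT : T.length - (k + 1) = 0 := by omega
    rw [hS, hT, List.drop_zero, List.drop_zero] at heq
    exact ED_eq_zero (by exact_mod_cast heq)
  · -- S = T → RSD = 0
    rintro rfl
    unfold RSD
    simp [ED_self]
  · -- symmetry
    unfold RSD
    congr 1
    funext k
    rw [ED_symm]
  · -- triangle
    refine ciSup_le fun k => ?_
    have htri := ED_triangle (S.drop (S.length - (k + 1))) (T.drop (T.length - (k + 1)))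
      (U.drop (U.length - (k + 1)))
    have hpos : (0:ℝ) < 2 * ((k : ℝ) + 1) := by positivity
    calc (ED (S.drop (S.length - (k + 1))) (U.drop (U.length - (k + 1))) : ℝ) /
          (2 * ((k : ℝ) + 1))
        ≤ ((ED (S.drop (S.length - (k + 1))) (T.drop (T.length - (k + 1))) : ℝ) +
            (ED (T.drop (T.length - (k + 1))) (U.drop (U.length - (k + 1))) : ℝ)) /
          (2 * ((k : ℝ) + 1)) := by
          gcongr
          exact_mod_cast htri
      _ = (ED (S.drop (S.length - (k + 1))) (T.drop (T.length - (k + 1))) : ℝ) /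
            (2 * ((k : ℝ) + 1)) +
          (ED (T.drop (T.length - (k + 1))) (U.drop (U.length - (k + 1))) : ℝ) /
            (2 * ((k : ℝ) + 1)) := add_div _ _ _
      _ ≤ RSD S T + RSD T U :=
          add_le_add (le_ciSup (RSD_bdd S T) k) (le_ciSup (RSD_bdd T U) k)
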